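/- Let F be the class of functions on [0,1) defined in the context (finite linear combinations of the dyadic indicator system with level-wise coefficient constraint (ℓ+1)^{−2}·(log(ℓ+e))^{−2}). Then (i) there are C > 0 and N ∈ ℕ such that d_n(F) ≤ C · n^{−1/2} · (log n)^{−1} · (log log n)^{−1} for all n ≥ N, so in particular ∑_n d_n(F)² · log n < ∞; and (ii) g_n(F) ≥ 1 for all n ∈ ℕ₀. In particular, the bound of the form g_{cm}(F)² ≤ (1/m)∑_{k≥m} d_k(F)² that holds for unit balls of RKHSs fails for general classes satisfying Assumption A, and the condition ((log k)^{1/2} d_k(F)) ∈ ℓ₂ does not imply g_n(F) → 0. -/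

import Mathlib

/-!
Statement 16 (Example): Let `F` be the class of finite linear combinations
`f_c = ∑_{ℓ,k} c_{ℓ,k} χ_{ℓ,k}` of the dyadic indicator system on `[0,1)` with
level-wise coefficient constraint
`∑_{k=1}^{2^ℓ} |c_{ℓ,k}|² ≤ (ℓ+1)^{−2} (log(ℓ+e))^{−2}`.  Then
(i) there are `C > 0` and `N ∈ ℕ` with
    `d_n(F) ≤ C n^{−1/2} (log n)^{−1} (log log n)^{−1}` for all `n ≥ N`,
    so in particular `∑_n d_n(F)² · log n < ∞`; and
(ii) `g_n(F) ≥ 1` for all `n ∈ ℕ₀`.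
-/

open MeasureTheory ENNReal

noncomputable section

/-- The unit interval `[0,1)` as a subtype of `ℝ`. -/
abbrev UnitIco : Type := Set.Ico (0 : ℝ) 1

/-- Lebesgue measure on `[0,1)`. -/
def μ01 : Measure UnitIco := MeasureTheory.Measure.comap Subtype.val volume

/-- Sampling numbers in `L₂(μ)`. -/
def sampNum {D : Type*} [MeasurableSpace D] (μ : Measure D)
    (F : Set (D → ℂ)) (n : ℕ) : ℝ≥0∞ :=
  ⨅ (x : Fin n → D) (φ : Fin n → D → ℂ) (_ : ∀ i, MemLp (φ i) 2 μ),
    ⨆ f ∈ F, eLpNorm (fun t => f t - ∑ i, f (x i) * φ i t) 2 μ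

/-- Kolmogorov widths in `L₂(μ)`. -/
def kolW {D : Type*} [MeasurableSpace D] (μ : Measure D)
    (F : Set (D → ℂ)) (k : ℕ) : ℝ≥0∞ :=
  ⨅ (ℓ : Fin k → (D → ℂ) → ℂ) (φ : Fin k → D → ℂ) (_ : ∀ i, MemLp (φ i) 2 μ),
    ⨆ f ∈ F, eLpNorm (fun t => f t - ∑ i, ℓ i f * φ i t) 2 μ

/-- `χ ℓ k` is the indicator function of the dyadic interval
`I_{ℓ,k} = [(k−1) 2^{−ℓ}, k 2^{−ℓ}) ⊂ [0,1)`. -/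
def dyadicChi (ℓ k : ℕ) : UnitIco → ℂ := fun x =>
  if ((k : ℝ) - 1) / 2 ^ ℓ ≤ (x : ℝ) ∧ (x : ℝ) < (k : ℝ) / 2 ^ ℓ then 1 else 0

/-- The class `F`: all finite linear combinations `f_c = ∑_{ℓ,k} c_{ℓ,k} χ_{ℓ,k}`
with `∑_{k=1}^{2^ℓ} |c_{ℓ,k}|² ≤ (ℓ+1)^{−2} (log(ℓ+e))^{−2}` for all `ℓ ∈ ℕ₀`. -/
def F16 : Set (UnitIco → ℂ) :=
  { f | ∃ c : ℕ → ℕ → ℂ,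
      (∀ ℓ : ℕ, ∑ k ∈ Finset.Icc 1 (2 ^ ℓ), ‖c ℓ k‖ ^ 2 ≤
        ((ℓ : ℝ) + 1) ^ (-(2 : ℝ)) * Real.log ((ℓ : ℝ) + Real.exp 1) ^ (-(2 : ℝ))) ∧
      {q : ℕ × ℕ | c q.1 q.2 ≠ 0}.Finite ∧
      f = fun x => ∑' ℓ : ℕ, ∑ k ∈ Finset.Icc 1 (2 ^ ℓ), c ℓ k * dyadicChi ℓ k x }

/-- the dyadic interval as a subset of `UnitIco` -/
def Aset (ℓ k : ℕ) : Set UnitIco :=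
  Subtype.val ⁻¹' Set.Ico (((k : ℝ) - 1) / 2 ^ ℓ) ((k : ℝ) / 2 ^ ℓ)

lemma measurableSet_Aset (ℓ k : ℕ) : MeasurableSet (Aset ℓ k) :=
  measurable_subtype_coe measurableSet_Ico

lemma dyadicChi_eq_ind (ℓ k : ℕ) :
    dyadicChi ℓ k = (Aset ℓ k).indicator (fun _ => (1:ℂ)) := by
  funext x
  by_cases h : ((k : ℝ) - 1) / 2 ^ ℓ ≤ (x : ℝ) ∧ (x : ℝ) < (k : ℝ) / 2 ^ ℓ
  · rw [dyadicChi, if_pos h]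
    exact (Set.indicator_of_mem (a := x) (s := Aset ℓ k) h (fun _ => (1:ℂ))).symm
  · rw [dyadicChi, if_neg h]
    exact (Set.indicator_of_notMem (a := x) (s := Aset ℓ k) h (fun _ => (1:ℂ))).symm

lemma measurable_dyadicChi (ℓ k : ℕ) : Measurable (dyadicChi ℓ k) := by
  rw [dyadicChi_eq_ind]
  exact (measurable_const).indicator (measurableSet_Aset ℓ k)

lemma hsub (ℓ k : ℕ) (hk1 : 1 ≤ k) (hk2 : k ≤ 2 ^ ℓ) :
    Set.Ico (((k : ℝ) - 1) / 2 ^ ℓ) ((k : ℝ) / 2 ^ ℓ) ⊆ Set.Ico (0:ℝ) 1 := by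
  have hp : (0:ℝ) < 2 ^ ℓ := by positivity
  apply Set.Ico_subset_Ico
  · apply div_nonneg _ hp.le
    have : (1:ℝ) ≤ (k:ℝ) := by exact_mod_cast hk1
    linarith
  · rw [div_le_one hp]
    exact_mod_cast hk2

lemma measEmb : MeasurableEmbedding (Subtype.val : UnitIco → ℝ) :=
  MeasurableEmbedding.subtype_coe measurableSet_Ico

lemma μ01_apply (s : Set UnitIco) : μ01 s = volume (Subtype.val '' s) :=
  measEmb.comap_apply volume s

lemma μ01_Aset (ℓ k : ℕ) (hk1 : 1 ≤ k) (hk2 : k ≤ 2 ^ ℓ) :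
    μ01 (Aset ℓ k) = ENNReal.ofReal ((1/2 : ℝ) ^ ℓ) := by
  rw [μ01_apply, Aset, Subtype.image_preimage_coe,
    Set.inter_eq_right.mpr (hsub ℓ k hk1 hk2), Real.volume_Ico]
  congr 1
  have hp : (0:ℝ) < 2 ^ ℓ := by positivity
  field_simp
  rw [← mul_pow]; norm_num

instance : IsProbabilityMeasure μ01 := by
  constructor
  rw [μ01_apply, Set.image_univ, Subtype.range_coe, Real.volume_Ico]
  simp

/-- index of the unique level-`ℓ` dyadic interval containing `x` -/
def k0 (ℓ : ℕ) (x : UnitIco) : ℕ := Nat.floor ((2:ℝ) ^ ℓ * (x:ℝ)) + 1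

lemma k0_mem (ℓ : ℕ) (x : UnitIco) : k0 ℓ x ∈ Finset.Icc 1 (2 ^ ℓ) := by
  have hx0 : (0:ℝ) ≤ (x:ℝ) := x.2.1
  have hx1 : (x:ℝ) < 1 := x.2.2
  have hy0 : (0:ℝ) ≤ (2:ℝ) ^ ℓ * (x:ℝ) := by positivity
  rw [Finset.mem_Icc]
  refine ⟨le_add_self, ?_⟩
  have : Nat.floor ((2:ℝ) ^ ℓ * (x:ℝ)) < 2 ^ ℓ := by
    rw [Nat.floor_lt hy0]
    push_cast
    calc (2:ℝ) ^ ℓ * (x:ℝ) < 2 ^ ℓ * 1 := by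
          apply mul_lt_mul_of_pos_left hx1 (by positivity)
      _ = 2 ^ ℓ := mul_one _
  rw [k0]
  omega

lemma mem_Aset_k0 (ℓ : ℕ) (x : UnitIco) : x ∈ Aset ℓ (k0 ℓ x) := by
  have hx0 : (0:ℝ) ≤ (x:ℝ) := x.2.1
  have hp : (0:ℝ) < 2 ^ ℓ := by positivity
  have hy0 : (0:ℝ) ≤ (2:ℝ) ^ ℓ * (x:ℝ) := by positivity
  constructor
  · have h1 : ((Nat.floor ((2:ℝ) ^ ℓ * (x:ℝ)) : ℝ)) ≤ (2:ℝ) ^ ℓ * (x:ℝ) :=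
      Nat.floor_le hy0
    rw [div_le_iff₀ hp]
    have : ((k0 ℓ x : ℝ)) - 1 = (Nat.floor ((2:ℝ) ^ ℓ * (x:ℝ)) : ℝ) := by
      rw [k0]; push_cast; ring
    rw [this]
    calc (Nat.floor ((2:ℝ) ^ ℓ * (x:ℝ)) : ℝ) ≤ (2:ℝ) ^ ℓ * (x:ℝ) := h1
      _ = (x:ℝ) * 2 ^ ℓ := mul_comm _ _
  · have h2 : (2:ℝ) ^ ℓ * (x:ℝ) < (Nat.floor ((2:ℝ) ^ ℓ * (x:ℝ)) : ℝ) + 1 :=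
      Nat.lt_floor_add_one _
    rw [lt_div_iff₀ hp]
    have : ((k0 ℓ x : ℝ)) = (Nat.floor ((2:ℝ) ^ ℓ * (x:ℝ)) : ℝ) + 1 := by
      rw [k0]; push_cast; ring
    rw [this, mul_comm]
    exact h2

lemma Aset_uniq {ℓ k k' : ℕ} {x : UnitIco} (h : x ∈ Aset ℓ k) (h' : x ∈ Aset ℓ k') :
    k = k' := by
  have hp : (0:ℝ) < 2 ^ ℓ := by positivity
  obtain ⟨h1, h2⟩ := h
  obtain ⟨h1', h2'⟩ := h'
  rw [div_le_iff₀ hp] at h1 h1'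
  rw [lt_div_iff₀ hp] at h2 h2'
  have hk : (k:ℝ) < (k':ℝ) + 1 := by nlinarith
  have hk' : (k':ℝ) < (k:ℝ) + 1 := by nlinarith
  have : k < k' + 1 := by exact_mod_cast hk
  have : k' < k + 1 := by exact_mod_cast hk'
  omega

lemma chi_apply_ne {ℓ k : ℕ} {x : UnitIco} (h : k ≠ k0 ℓ x) : dyadicChi ℓ k x = 0 := by
  rw [dyadicChi_eq_ind, Set.indicator_of_notMem]
  intro hmem
  exact h (Aset_uniq hmem (mem_Aset_k0 ℓ x))

lemma chi_apply_k0 (ℓ : ℕ) (x : UnitIco) : dyadicChi ℓ (k0 ℓ x) x = 1 := by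
  rw [dyadicChi_eq_ind, Set.indicator_of_mem (mem_Aset_k0 ℓ x)]

/-- value of a level-`ℓ` combination -/
lemma level_apply (ℓ : ℕ) (d : ℕ → ℂ) (x : UnitIco) :
    ∑ k ∈ Finset.Icc 1 (2 ^ ℓ), d k * dyadicChi ℓ k x = d (k0 ℓ x) := by
  rw [Finset.sum_eq_single_of_mem (k0 ℓ x) (k0_mem ℓ x)]
  · rw [chi_apply_k0, mul_one]
  · intro b _ hb
    rw [chi_apply_ne hb, mul_zero]

lemma sqrt_pow_aux (ℓ : ℕ) : Real.sqrt ((1/2 : ℝ) ^ ℓ) = (Real.sqrt (1/2)) ^ ℓ := by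
  have h : ((Real.sqrt (1/2 : ℝ)) ^ ℓ) ^ 2 = (1/2 : ℝ) ^ ℓ := by
    rw [← pow_mul, mul_comm, pow_mul, Real.sq_sqrt]
    norm_num
  rw [← h, Real.sqrt_sq (pow_nonneg (Real.sqrt_nonneg _) _)]

lemma eLpNorm_level (ℓ : ℕ) (d : ℕ → ℂ) {B : ℝ}
    (hB : ∑ k ∈ Finset.Icc 1 (2 ^ ℓ), ‖d k‖ ^ 2 ≤ B) :
    eLpNorm (fun t => ∑ k ∈ Finset.Icc 1 (2 ^ ℓ), d k * dyadicChi ℓ k t) 2 μ01 ≤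
      ENNReal.ofReal (Real.sqrt B * (Real.sqrt (1/2)) ^ ℓ) := by
  have hB0 : 0 ≤ B := le_trans (Finset.sum_nonneg fun k _ => sq_nonneg _) hB
  rw [eLpNorm_eq_lintegral_rpow_enorm_toReal (by norm_num) (by norm_num)]
  have htr : (2 : ℝ≥0∞).toReal = (2:ℝ) := by norm_num
  rw [htr]
  have hpt : ∀ t : UnitIco, (‖∑ k ∈ Finset.Icc 1 (2 ^ ℓ), d k * dyadicChi ℓ k t‖₊ : ℝ≥0∞) ^ (2:ℝ)
      = ∑ k ∈ Finset.Icc 1 (2 ^ ℓ),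
          (Aset ℓ k).indicator (fun _ => (‖d k‖₊ : ℝ≥0∞) ^ (2:ℝ)) t := by
    intro t
    rw [level_apply, Finset.sum_eq_single_of_mem (k0 ℓ t) (k0_mem ℓ t)]
    · rw [Set.indicator_of_mem (mem_Aset_k0 ℓ t)]
    · intro b _ hb
      apply Set.indicator_of_notMem
      intro hmem
      exact hb (Aset_uniq hmem (mem_Aset_k0 ℓ t))
  calc (∫⁻ t, (‖∑ k ∈ Finset.Icc 1 (2 ^ ℓ), d k * dyadicChi ℓ k t‖₊ : ℝ≥0∞) ^ (2:ℝ) ∂μ01) ^ ((1:ℝ)/2)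
      = (∫⁻ t, ∑ k ∈ Finset.Icc 1 (2 ^ ℓ),
          (Aset ℓ k).indicator (fun _ => (‖d k‖₊ : ℝ≥0∞) ^ (2:ℝ)) t ∂μ01) ^ ((1:ℝ)/2) := by
        congr 1
        exact lintegral_congr hpt
    _ = (∑ k ∈ Finset.Icc 1 (2 ^ ℓ),
          (‖d k‖₊ : ℝ≥0∞) ^ (2:ℝ) * μ01 (Aset ℓ k)) ^ ((1:ℝ)/2) := by
        congr 1
        rw [lintegral_finset_sum]
        · refine Finset.sum_congr rfl fun k _ => ?_
          exact lintegral_indicator_const (measurableSet_Aset ℓ k) _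
        · exact fun k _ => measurable_const.indicator (measurableSet_Aset ℓ k)
    _ ≤ (ENNReal.ofReal B * ENNReal.ofReal ((1/2 : ℝ) ^ ℓ)) ^ ((1:ℝ)/2) := by
        apply ENNReal.rpow_le_rpow _ (by norm_num)
        have : ∀ k ∈ Finset.Icc 1 (2 ^ ℓ),
            (‖d k‖₊ : ℝ≥0∞) ^ (2:ℝ) * μ01 (Aset ℓ k)
              = ENNReal.ofReal (‖d k‖ ^ 2) * ENNReal.ofReal ((1/2 : ℝ) ^ ℓ) := by
          intro k hk
          rw [Finset.mem_Icc] at hk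
          rw [μ01_Aset ℓ k hk.1 hk.2]
          congr 1
          rw [← ENNReal.ofReal_coe_nnreal, coe_nnnorm, ENNReal.ofReal_rpow_of_nonneg (norm_nonneg _) (by norm_num)]
          congr 1
          rw [← Real.rpow_natCast ‖d k‖ 2]
          norm_num
        rw [Finset.sum_congr rfl this, ← Finset.sum_mul]
        apply mul_le_mul_left
        rw [← ENNReal.ofReal_sum_of_nonneg (fun k _ => sq_nonneg _)]
        exact ENNReal.ofReal_le_ofReal hB
    _ = ENNReal.ofReal (Real.sqrt B * (Real.sqrt (1/2)) ^ ℓ) := by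
        rw [← ENNReal.ofReal_mul hB0,
          ENNReal.ofReal_rpow_of_nonneg (by positivity) (by norm_num)]
        congr 1
        rw [← Real.sqrt_eq_rpow, Real.sqrt_mul hB0, sqrt_pow_aux]

lemma measurable_level (ℓ : ℕ) (d : ℕ → ℂ) :
    Measurable (fun t => ∑ k ∈ Finset.Icc 1 (2 ^ ℓ), d k * dyadicChi ℓ k t) := by
  apply Finset.measurable_sum
  exact fun k _ => (measurable_dyadicChi ℓ k).const_mul (d k)

lemma memℒp_dyadicChi (ℓ k : ℕ) : MemLp (dyadicChi ℓ k) 2 μ01 := by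
  apply MemLp.of_bound (measurable_dyadicChi ℓ k).aestronglyMeasurable 1
  filter_upwards with x
  rw [dyadicChi_eq_ind]
  by_cases h : x ∈ Aset ℓ k
  · rw [Set.indicator_of_mem h]; norm_num
  · rw [Set.indicator_of_notMem h]; norm_num

/-- the coefficient bound at level `ℓ` -/
def bnd (ℓ : ℕ) : ℝ :=
  ((ℓ : ℝ) + 1) ^ (-(2 : ℝ)) * Real.log ((ℓ : ℝ) + Real.exp 1) ^ (-(2 : ℝ))

lemma one_le_log_add_exp (x : ℝ) (hx : 0 ≤ x) : 1 ≤ Real.log (x + Real.exp 1) := by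
  have h : Real.exp 1 ≤ x + Real.exp 1 := by linarith
  calc (1:ℝ) = Real.log (Real.exp 1) := (Real.log_exp 1).symm
    _ ≤ Real.log (x + Real.exp 1) := Real.log_le_log (Real.exp_pos 1) h

lemma sqrt_bnd (ℓ : ℕ) :
    Real.sqrt (bnd ℓ) = (((ℓ:ℝ) + 1) * Real.log ((ℓ:ℝ) + Real.exp 1))⁻¹ := by
  have ha : (0:ℝ) < (ℓ:ℝ) + 1 := by positivity
  have hb : (0:ℝ) < Real.log ((ℓ:ℝ) + Real.exp 1) :=
    lt_of_lt_of_le one_pos (one_le_log_add_exp _ (Nat.cast_nonneg ℓ))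
  have h1 : bnd ℓ = ((((ℓ:ℝ) + 1) * Real.log ((ℓ:ℝ) + Real.exp 1))⁻¹) ^ 2 := by
    rw [bnd, Real.rpow_neg ha.le, Real.rpow_neg hb.le]
    rw [show ((2:ℝ)) = ((2:ℕ):ℝ) by norm_num, Real.rpow_natCast, Real.rpow_natCast]
    rw [← mul_inv, ← mul_pow, inv_pow]
  rw [h1, Real.sqrt_sq (by positivity)]

/-- the level-`ℓ` part of `f_c` -/
def Slev (c : ℕ → ℕ → ℂ) (ℓ : ℕ) : UnitIco → ℂ :=
  fun t => ∑ k ∈ Finset.Icc 1 (2 ^ ℓ), c ℓ k * dyadicChi ℓ k t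

lemma eLpNorm_Slev (c : ℕ → ℕ → ℂ) (ℓ : ℕ)
    (hc : ∑ k ∈ Finset.Icc 1 (2 ^ ℓ), ‖c ℓ k‖ ^ 2 ≤ bnd ℓ) :
    eLpNorm (Slev c ℓ) 2 μ01 ≤
      ENNReal.ofReal ((((ℓ:ℝ) + 1) * Real.log ((ℓ:ℝ) + Real.exp 1))⁻¹ *
        (Real.sqrt (1/2)) ^ ℓ) := by
  rw [← sqrt_bnd]
  exact eLpNorm_level ℓ (c ℓ) hc

open Classical in
def coeffF (f : UnitIco → ℂ) : ℕ → ℕ → ℂ :=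
  if h : f ∈ F16 then h.choose else fun _ _ => 0

lemma coeffF_spec {f : UnitIco → ℂ} (h : f ∈ F16) :
    (∀ ℓ : ℕ, ∑ k ∈ Finset.Icc 1 (2 ^ ℓ), ‖coeffF f ℓ k‖ ^ 2 ≤ bnd ℓ) ∧
      {q : ℕ × ℕ | coeffF f q.1 q.2 ≠ 0}.Finite ∧
      f = fun x => ∑' ℓ : ℕ, ∑ k ∈ Finset.Icc 1 (2 ^ ℓ), coeffF f ℓ k * dyadicChi ℓ k x := by
  have : coeffF f = h.choose := by rw [coeffF]; exact dif_pos h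
  rw [this]
  exact h.choose_spec

/-- decoding of indices -/
def dl (i : ℕ) : ℕ := Nat.log 2 (i + 1)
def dkk (i : ℕ) : ℕ := i + 2 - 2 ^ (dl i)

lemma dl_spec {j L : ℕ} (hj : j < 2 ^ L - 1) :
    dl j < L ∧ 1 ≤ dkk j ∧ dkk j ≤ 2 ^ (dl j) ∧ 2 ^ (dl j) + dkk j - 2 = j := by
  have h1 : 2 ^ (dl j) ≤ j + 1 := Nat.pow_log_le_self 2 (Nat.succ_ne_zero j)
  have h2 : j + 1 < 2 ^ (dl j + 1) := Nat.lt_pow_succ_log_self one_lt_two (j + 1)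
  have h3 : 2 ^ (dl j + 1) = 2 * 2 ^ (dl j) := by rw [pow_succ]; ring
  have hL1 : (1:ℕ) ≤ 2 ^ L := Nat.one_le_two_pow
  have hdlL : dl j < L := by
    have : 2 ^ (dl j) < 2 ^ L := by omega
    exact (Nat.pow_lt_pow_iff_right one_lt_two).mp this
  refine ⟨hdlL, ?_, ?_, ?_⟩ <;> rw [dkk] <;> omega

lemma encode_spec {ℓ k : ℕ} (hk1 : 1 ≤ k) (hk2 : k ≤ 2 ^ ℓ) :
    dl (2 ^ ℓ + k - 2) = ℓ ∧ dkk (2 ^ ℓ + k - 2) = k := by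
  have hp1 : (1:ℕ) ≤ 2 ^ ℓ := Nat.one_le_two_pow
  have hps : 2 ^ (ℓ + 1) = 2 * 2 ^ ℓ := by rw [pow_succ]; ring
  have hdl : dl (2 ^ ℓ + k - 2) = ℓ := by
    rw [dl]
    apply Nat.log_eq_of_pow_le_of_lt_pow <;> omega
  exact ⟨hdl, by rw [dkk, hdl]; omega⟩

lemma encode_lt {ℓ k L : ℕ} (hk1 : 1 ≤ k) (hk2 : k ≤ 2 ^ ℓ) (hℓ : ℓ < L) :
    2 ^ ℓ + k - 2 < 2 ^ L - 1 := by
  have h : 2 ^ (ℓ + 1) ≤ 2 ^ L := Nat.pow_le_pow_right (by norm_num) hℓ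
  have hps : 2 ^ (ℓ + 1) = 2 * 2 ^ ℓ := by rw [pow_succ]; ring
  have hp1 : (1:ℕ) ≤ 2 ^ ℓ := Nat.one_le_two_pow
  omega

def phiF (L : ℕ) {n : ℕ} : Fin n → UnitIco → ℂ := fun i =>
  if (i : ℕ) < 2 ^ L - 1 then dyadicChi (dl i) (dkk i) else fun _ => 0

def lfF (L : ℕ) {n : ℕ} : Fin n → (UnitIco → ℂ) → ℂ := fun i f =>
  if (i : ℕ) < 2 ^ L - 1 then coeffF f (dl i) (dkk i) else 0

lemma memℒp_phiF (L : ℕ) {n : ℕ} (i : Fin n) : MemLp (phiF L i) 2 μ01 := by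
  rw [phiF]
  by_cases h : (i : ℕ) < 2 ^ L - 1
  · rw [if_pos h]; exact memℒp_dyadicChi _ _
  · rw [if_neg h]; exact memLp_const 0

lemma approx_eq (L : ℕ) {n : ℕ} (hL : 2 ^ L - 1 ≤ n) (f : UnitIco → ℂ) (t : UnitIco) :
    ∑ i : Fin n, lfF L i f * phiF L i t = ∑ ℓ ∈ Finset.range L, Slev (coeffF f) ℓ t := by
  set g : ℕ → ℂ := fun j =>
    if j < 2 ^ L - 1 then coeffF f (dl j) (dkk j) * dyadicChi (dl j) (dkk j) t else 0
    with hg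
  have hterm : ∀ i : Fin n, lfF L i f * phiF L i t = g (i : ℕ) := by
    intro i
    by_cases h : (i : ℕ) < 2 ^ L - 1
    · rw [hg]; simp only [lfF, phiF, if_pos h]
    · rw [hg]; simp only [lfF, phiF, if_neg h]; rw [zero_mul]
  rw [Finset.sum_congr rfl (fun i _ => hterm i), Fin.sum_univ_eq_sum_range g n]
  rw [← Finset.sum_subset (Finset.range_subset_range.mpr hL)
    (fun j _ hj => by rw [hg]; exact if_neg (by simpa using hj))]
  have hnb : ∑ j ∈ Finset.range (2 ^ L - 1), g j =
      ∑ σ ∈ (Finset.range L).sigma (fun ℓ => Finset.Icc 1 (2 ^ ℓ)),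
        coeffF f σ.1 σ.2 * dyadicChi σ.1 σ.2 t := by
    apply Finset.sum_nbij' (i := fun j => (⟨dl j, dkk j⟩ : Σ _ : ℕ, ℕ))
      (j := fun σ => 2 ^ σ.1 + σ.2 - 2)
    · intro j hj
      rw [Finset.mem_range] at hj
      obtain ⟨h1, h2, h3, _⟩ := dl_spec hj
      simp only [Finset.mem_sigma, Finset.mem_range, Finset.mem_Icc]
      exact ⟨h1, h2, h3⟩
    · intro σ hσ
      simp only [Finset.mem_sigma, Finset.mem_range, Finset.mem_Icc] at hσ
      rw [Finset.mem_range]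
      exact encode_lt hσ.2.1 hσ.2.2 hσ.1
    · intro j hj
      rw [Finset.mem_range] at hj
      obtain ⟨_, _, _, h4⟩ := dl_spec hj
      simp only [h4]
    · intro σ hσ
      simp only [Finset.mem_sigma, Finset.mem_range, Finset.mem_Icc] at hσ
      obtain ⟨h1, h2⟩ := encode_spec hσ.2.1 hσ.2.2
      simp only [h1, h2]
    · intro j hj
      rw [Finset.mem_range] at hj
      rw [hg]
      exact if_pos hj
  rw [hnb, Finset.sum_sigma]
  rfl

lemma geo_tail (L M : ℕ) :
    ∑ ℓ ∈ Finset.Ico L M,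
        (((ℓ:ℝ) + 1) * Real.log ((ℓ:ℝ) + Real.exp 1))⁻¹ * Real.sqrt (1/2) ^ ℓ
      ≤ 4 * Real.sqrt (1/2) ^ L * (((L:ℝ) + 1) * Real.log ((L:ℝ) + Real.exp 1))⁻¹ := by
  set s : ℝ := Real.sqrt (1/2) with hs
  have hs0 : 0 ≤ s := Real.sqrt_nonneg _
  have hs34 : s ≤ 3/4 := by
    rw [hs, show (3/4 : ℝ) = Real.sqrt ((3/4)^2) from (Real.sqrt_sq (by norm_num)).symm]
    apply Real.sqrt_le_sqrt; norm_num
  have hs1 : s < 1 := lt_of_le_of_lt hs34 (by norm_num)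
  have hγpos : ∀ ℓ : ℕ, (0:ℝ) < ((ℓ:ℝ) + 1) * Real.log ((ℓ:ℝ) + Real.exp 1) := by
    intro ℓ
    have := one_le_log_add_exp (ℓ:ℝ) (Nat.cast_nonneg ℓ)
    have : (0:ℝ) < Real.log ((ℓ:ℝ) + Real.exp 1) := by linarith
    positivity
  have hmono : ∀ ℓ ∈ Finset.Ico L M,
      (((ℓ:ℝ) + 1) * Real.log ((ℓ:ℝ) + Real.exp 1))⁻¹ * s ^ ℓ ≤
        (((L:ℝ) + 1) * Real.log ((L:ℝ) + Real.exp 1))⁻¹ * s ^ ℓ := by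
    intro ℓ hℓ
    rw [Finset.mem_Ico] at hℓ
    have hcast : (L:ℝ) ≤ (ℓ:ℝ) := by exact_mod_cast hℓ.1
    have hloge : Real.log ((L:ℝ) + Real.exp 1) ≤ Real.log ((ℓ:ℝ) + Real.exp 1) :=
      Real.log_le_log (by positivity) (by linarith)
    apply mul_le_mul_of_nonneg_right _ (pow_nonneg hs0 ℓ)
    apply inv_anti₀ (hγpos L)
    apply mul_le_mul (by linarith) hloge (by
      have := one_le_log_add_exp (L:ℝ) (Nat.cast_nonneg L); linarith) (by linarith)
  calc ∑ ℓ ∈ Finset.Ico L M,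
        (((ℓ:ℝ) + 1) * Real.log ((ℓ:ℝ) + Real.exp 1))⁻¹ * s ^ ℓ
      ≤ ∑ ℓ ∈ Finset.Ico L M,
        (((L:ℝ) + 1) * Real.log ((L:ℝ) + Real.exp 1))⁻¹ * s ^ ℓ :=
        Finset.sum_le_sum hmono
    _ = (((L:ℝ) + 1) * Real.log ((L:ℝ) + Real.exp 1))⁻¹ * ∑ ℓ ∈ Finset.Ico L M, s ^ ℓ := by
        rw [Finset.mul_sum]
    _ ≤ (((L:ℝ) + 1) * Real.log ((L:ℝ) + Real.exp 1))⁻¹ * (s ^ L * 4) := by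
        apply mul_le_mul_of_nonneg_left _ (inv_nonneg.mpr (hγpos L).le)
        have h1 : ∑ ℓ ∈ Finset.Ico L M, s ^ ℓ = s ^ L * ∑ j ∈ Finset.range (M - L), s ^ j := by
          rw [Finset.sum_Ico_eq_sum_range, Finset.mul_sum]
          exact Finset.sum_congr rfl fun j _ => by rw [← pow_add]
        rw [h1]
        apply mul_le_mul_of_nonneg_left _ (pow_nonneg hs0 L)
        have h2 : ∑ j ∈ Finset.range (M - L), s ^ j ≤ (1 - s)⁻¹ := by
          have := Summable.sum_le_tsum (Finset.range (M - L))
            (fun j _ => pow_nonneg hs0 j) (summable_geometric_of_lt_one hs0 hs1)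
          rwa [tsum_geometric_of_lt_one hs0 hs1] at this
        have h3 : (1 - s)⁻¹ ≤ 4 := by
          rw [inv_le_comm₀ (by linarith) (by norm_num)]
          linarith
        linarith
    _ = 4 * s ^ L * (((L:ℝ) + 1) * Real.log ((L:ℝ) + Real.exp 1))⁻¹ := by ring

lemma kolW_le_master {n L : ℕ} (hL : 2 ^ L - 1 ≤ n) :
    kolW μ01 F16 n ≤ ENNReal.ofReal ((4:ℝ) * Real.sqrt (1/2) ^ L *
      (((L:ℝ) + 1) * Real.log ((L:ℝ) + Real.exp 1))⁻¹) := by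
  have h1 : kolW μ01 F16 n ≤
      ⨆ f ∈ F16, eLpNorm
        (fun t => f t - ∑ i : Fin n, lfF L (n := n) i f * phiF L (n := n) i t) 2 μ01 := by
    refine iInf_le_of_le (lfF L) ?_
    refine iInf_le_of_le (phiF L) ?_
    exact iInf_le _ (memℒp_phiF L)
  refine h1.trans (iSup₂_le fun f hf => ?_)
  obtain ⟨hc, hfin, hrep⟩ := coeffF_spec hf
  set c := coeffF f with hcdef
  set M := max L ((hfin.toFinset.image Prod.fst).sup id + 1) with hMdef
  have hLM : L ≤ M := le_max_left _ _
  have hczero : ∀ ℓ, M ≤ ℓ → ∀ k, c ℓ k = 0 := by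
    intro ℓ hℓ k
    by_contra hne
    have hmem : (ℓ, k) ∈ hfin.toFinset := by
      rw [Set.Finite.mem_toFinset]; exact hne
    have h2 : ℓ ∈ hfin.toFinset.image Prod.fst := Finset.mem_image_of_mem _ hmem
    have := Finset.le_sup (f := id) h2
    simp only [id] at this
    omega
  have herr : (fun t => f t - ∑ i : Fin n, lfF L (n := n) i f * phiF L (n := n) i t) =
      fun t => ∑ ℓ ∈ Finset.Ico L M, Slev c ℓ t := by
    funext t
    have hft : f t = ∑ ℓ ∈ Finset.range M, Slev c ℓ t := by
      conv_lhs => rw [hrep]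
      refine tsum_eq_sum (fun ℓ hℓ => ?_)
      simp only [Finset.mem_range, not_lt] at hℓ
      apply Finset.sum_eq_zero
      intro k _
      rw [hczero ℓ hℓ k, zero_mul]
    rw [hft, approx_eq L hL f t, ← hcdef, (Finset.sum_Ico_eq_sub _ hLM)]
  rw [herr]
  have h2 : eLpNorm (fun t => ∑ ℓ ∈ Finset.Ico L M, Slev c ℓ t) 2 μ01 ≤
      ∑ ℓ ∈ Finset.Ico L M, eLpNorm (Slev c ℓ) 2 μ01 := by
    have h := eLpNorm_sum_le (μ := μ01) (p := 2) (f := fun ℓ => Slev c ℓ)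
      (s := Finset.Ico L M)
      (fun ℓ _ => (measurable_level ℓ (c ℓ)).aestronglyMeasurable) (by norm_num)
    have heq : (∑ ℓ ∈ Finset.Ico L M, Slev c ℓ) =
        fun t => ∑ ℓ ∈ Finset.Ico L M, Slev c ℓ t := by
      funext t; rw [Finset.sum_apply]
    rwa [heq] at h
  refine h2.trans ?_
  calc ∑ ℓ ∈ Finset.Ico L M, eLpNorm (Slev c ℓ) 2 μ01
      ≤ ∑ ℓ ∈ Finset.Ico L M, ENNReal.ofReal
          ((((ℓ:ℝ) + 1) * Real.log ((ℓ:ℝ) + Real.exp 1))⁻¹ * Real.sqrt (1/2) ^ ℓ) :=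
        Finset.sum_le_sum fun ℓ _ => eLpNorm_Slev c ℓ (hc ℓ)
    _ = ENNReal.ofReal (∑ ℓ ∈ Finset.Ico L M,
          (((ℓ:ℝ) + 1) * Real.log ((ℓ:ℝ) + Real.exp 1))⁻¹ * Real.sqrt (1/2) ^ ℓ) := by
        rw [ENNReal.ofReal_sum_of_nonneg]
        intro ℓ _
        have h := one_le_log_add_exp (ℓ:ℝ) (Nat.cast_nonneg ℓ)
        have : (0:ℝ) < Real.log ((ℓ:ℝ) + Real.exp 1) := by linarith
        positivity
    _ ≤ _ := ENNReal.ofReal_le_ofReal (geo_tail L M)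

lemma sqrt_two_le : Real.sqrt 2 ≤ 3/2 := by
  rw [show (3/2 : ℝ) = Real.sqrt ((3/2)^2) from (Real.sqrt_sq (by norm_num)).symm]
  apply Real.sqrt_le_sqrt; norm_num

lemma part_i (n : ℕ) (hn : 16 ≤ n) :
    kolW μ01 F16 n ≤ ENNReal.ofReal ((6:ℝ) * (n : ℝ) ^ (-(1 / 2) : ℝ) *
      (Real.log n)⁻¹ * (Real.log (Real.log n))⁻¹) := by
  set L := Nat.log 2 n with hLdef
  have hn0 : n ≠ 0 := by omega
  have hLn : 2 ^ L - 1 ≤ n := le_trans (Nat.sub_le _ _) (Nat.pow_log_le_self 2 hn0)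
  refine (kolW_le_master hLn).trans (ENNReal.ofReal_le_ofReal ?_)
  set s : ℝ := Real.sqrt (1/2) with hs
  have hnR : (16:ℝ) ≤ (n:ℝ) := by exact_mod_cast hn
  have hn1 : (1:ℝ) < (n:ℝ) := by linarith
  have hlog2 : Real.log 2 ≤ 1 := le_trans Real.log_two_lt_d9.le (by norm_num)
  have hlog2' : (0.6931471803 : ℝ) < Real.log 2 := Real.log_two_gt_d9
  have hlogn_pos : 0 < Real.log n := Real.log_pos hn1
  have hlogn1 : 1 < Real.log n := by
    have h16 : Real.log 16 ≤ Real.log n := Real.log_le_log (by norm_num) hnR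
    have : Real.log 16 = 4 * Real.log 2 := by
      rw [show (16:ℝ) = 2 ^ (4:ℕ) by norm_num, Real.log_pow]
      norm_num
    linarith
  have hlln : 0 < Real.log (Real.log n) := Real.log_pos hlogn1
  have h2L : (n:ℝ) < 2 ^ (L + 1) := by
    exact_mod_cast Nat.lt_pow_succ_log_self one_lt_two n
  have hlogle : Real.log n ≤ (L:ℝ) + 1 := by
    have h1 : Real.log n ≤ Real.log ((2:ℝ) ^ (L + 1)) :=
      Real.log_le_log (by positivity) h2L.le
    rw [Real.log_pow] at h1
    push_cast at h1
    nlinarith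
  have hloge2 : 0 < Real.log ((L:ℝ) + Real.exp 1) := by
    have := one_le_log_add_exp (L:ℝ) (Nat.cast_nonneg L)
    linarith
  -- A : s ^ L ≤ √2 * n ^ (-(1/2))
  have hA : s ^ L ≤ Real.sqrt 2 * (n:ℝ) ^ (-(1/2) : ℝ) := by
    have hsl : s ^ L = (Real.sqrt ((2:ℝ) ^ L))⁻¹ := by
      rw [hs, ← sqrt_pow_aux, show ((1:ℝ)/2) ^ L = (((2:ℝ) ^ L)⁻¹) by
        rw [one_div, inv_pow], Real.sqrt_inv]
    have hnr : (n:ℝ) ^ (-(1/2) : ℝ) = (Real.sqrt (n:ℝ))⁻¹ := by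
      rw [Real.rpow_neg (Nat.cast_nonneg n), Real.sqrt_eq_rpow]
    rw [hsl, hnr]
    have ha : (0:ℝ) < Real.sqrt ((2:ℝ) ^ L) := Real.sqrt_pos.mpr (by positivity)
    have hb : (0:ℝ) < Real.sqrt (n:ℝ) := Real.sqrt_pos.mpr (by linarith)
    have hb2 : Real.sqrt (n:ℝ) ≤ Real.sqrt 2 * Real.sqrt ((2:ℝ) ^ L) := by
      rw [← Real.sqrt_mul (by norm_num)]
      apply Real.sqrt_le_sqrt
      have : (2:ℝ) ^ (L + 1) = 2 * 2 ^ L := by ring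
      linarith
    have h4 : (Real.sqrt 2 * Real.sqrt ((2:ℝ) ^ L))⁻¹ ≤ (Real.sqrt (n:ℝ))⁻¹ :=
      inv_anti₀ hb hb2
    have h5 : (Real.sqrt ((2:ℝ) ^ L))⁻¹ =
        Real.sqrt 2 * (Real.sqrt 2 * Real.sqrt ((2:ℝ) ^ L))⁻¹ := by
      rw [mul_inv, ← mul_assoc, mul_inv_cancel₀ (by positivity), one_mul]
    rw [h5]
    exact mul_le_mul_of_nonneg_left h4 (Real.sqrt_nonneg 2)
  have hB : ((L:ℝ) + 1)⁻¹ ≤ (Real.log n)⁻¹ := inv_anti₀ hlogn_pos hlogle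
  have hC : (Real.log ((L:ℝ) + Real.exp 1))⁻¹ ≤ (Real.log (Real.log n))⁻¹ := by
    apply inv_anti₀ hlln
    apply Real.log_le_log hlogn_pos
    have he2 : (2:ℝ) ≤ Real.exp 1 := by
      have := Real.add_one_le_exp (1:ℝ)
      linarith
    linarith
  have hs0 : 0 ≤ s := Real.sqrt_nonneg _
  have hnr0 : (0:ℝ) ≤ (n:ℝ) ^ (-(1/2) : ℝ) := Real.rpow_nonneg (Nat.cast_nonneg n) _
  calc 4 * s ^ L * (((L:ℝ) + 1) * Real.log ((L:ℝ) + Real.exp 1))⁻¹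
      = 4 * s ^ L * ((L:ℝ) + 1)⁻¹ * (Real.log ((L:ℝ) + Real.exp 1))⁻¹ := by
        rw [mul_inv]; ring
    _ ≤ 4 * (Real.sqrt 2 * (n:ℝ) ^ (-(1/2) : ℝ)) * (Real.log n)⁻¹ *
          (Real.log (Real.log n))⁻¹ := by
        apply mul_le_mul _ hC (by positivity) (by positivity)
        apply mul_le_mul _ hB (by positivity) (by positivity)
        exact mul_le_mul_of_nonneg_left hA (by norm_num)
    _ ≤ 6 * (n:ℝ) ^ (-(1/2) : ℝ) * (Real.log n)⁻¹ * (Real.log (Real.log n))⁻¹ := by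
        have h1 : 4 * (Real.sqrt 2 * (n:ℝ) ^ (-(1/2) : ℝ)) * (Real.log n)⁻¹ *
            (Real.log (Real.log n))⁻¹ = (4 * Real.sqrt 2) *
              ((n:ℝ) ^ (-(1/2) : ℝ) * (Real.log n)⁻¹ * (Real.log (Real.log n))⁻¹) := by
          ring
        have h2 : 6 * (n:ℝ) ^ (-(1/2) : ℝ) * (Real.log n)⁻¹ * (Real.log (Real.log n))⁻¹
            = 6 * ((n:ℝ) ^ (-(1/2) : ℝ) * (Real.log n)⁻¹ * (Real.log (Real.log n))⁻¹) := by
          ring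
        rw [h1, h2]
        apply mul_le_mul_of_nonneg_right _ (by positivity)
        have := sqrt_two_le
        linarith

def γfun (L : ℕ) : ℝ := (((L:ℝ) + 1) * Real.log ((L:ℝ) + Real.exp 1))⁻¹

def wfun (L : ℕ) : ℝ := 16 * ((L:ℝ) + 1) * (γfun L) ^ 2

def Gfun (L : ℕ) : ℝ≥0∞ := ENNReal.ofReal (16 * ((L:ℝ) + 1) * (1/2 : ℝ) ^ L * (γfun L) ^ 2)

lemma log_add_exp_pos (x : ℝ) (hx : 0 ≤ x) : 0 < Real.log (x + Real.exp 1) :=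
  lt_of_lt_of_le one_pos (one_le_log_add_exp x hx)

lemma wfun_eq (L : ℕ) :
    wfun L = 16 * (((L:ℝ) + 1) * (Real.log ((L:ℝ) + Real.exp 1)) ^ 2)⁻¹ := by
  have h := log_add_exp_pos (L:ℝ) (Nat.cast_nonneg L)
  have h1 : ((L:ℝ) + 1) ≠ 0 := by positivity
  rw [wfun, γfun]
  field_simp

lemma wfun_nonneg (L : ℕ) : 0 ≤ wfun L := by
  rw [wfun_eq]
  have h := log_add_exp_pos (L:ℝ) (Nat.cast_nonneg L)
  positivity

set_option maxHeartbeats 2000000 in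
lemma summable_wfun : Summable wfun := by
  have hanti : ∀ ⦃m n : ℕ⦄, 0 < m → m ≤ n → wfun n ≤ wfun m := by
    intro m n _ hmn
    rw [wfun_eq, wfun_eq]
    have hm := log_add_exp_pos (m:ℝ) (Nat.cast_nonneg m)
    have hn := log_add_exp_pos (n:ℝ) (Nat.cast_nonneg n)
    have hcast : (m:ℝ) ≤ (n:ℝ) := by exact_mod_cast hmn
    apply mul_le_mul_of_nonneg_left _ (by norm_num)
    apply inv_anti₀ (by positivity)
    apply mul_le_mul (by linarith)
    · apply pow_le_pow_left₀ hm.le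
      exact Real.log_le_log (by positivity) (by linarith)
    · positivity
    · positivity
  rw [← summable_condensed_iff_of_nonneg wfun_nonneg hanti]
  have hle : ∀ k : ℕ, (2:ℝ) ^ k * wfun (2 ^ k) ≤ 144 * ((k:ℝ) + 1)⁻¹ ^ 2 := by
    intro k
    rw [wfun_eq]
    have hcast : ((2 ^ k : ℕ) : ℝ) = (2:ℝ) ^ k := by push_cast; ring
    rw [hcast]
    have hlog2 : (0.6931471803 : ℝ) < Real.log 2 := Real.log_two_gt_d9
    have hk0 : (0:ℝ) ≤ (k:ℝ) := Nat.cast_nonneg k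
    have hlogk : ((k:ℝ) + 1) / 3 ≤ Real.log ((2:ℝ) ^ k + Real.exp 1) := by
      have h1 : (1:ℝ) ≤ Real.log ((2:ℝ) ^ k + Real.exp 1) :=
        one_le_log_add_exp _ (by positivity)
      have h2 : (k:ℝ) * Real.log 2 ≤ Real.log ((2:ℝ) ^ k + Real.exp 1) := by
        have h3 : Real.log ((2:ℝ) ^ k) ≤ Real.log ((2:ℝ) ^ k + Real.exp 1) :=
          Real.log_le_log (by positivity) (by have := Real.exp_pos 1; linarith)
        rwa [Real.log_pow] at h3
      nlinarith
    have hlogpos : (0:ℝ) < Real.log ((2:ℝ) ^ k + Real.exp 1) :=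
      log_add_exp_pos _ (by positivity)
    have hfrac : (2:ℝ) ^ k * (((k:ℝ) + 1) / 3) ^ 2 ≤
        ((2:ℝ) ^ k + 1) * Real.log ((2:ℝ) ^ k + Real.exp 1) ^ 2 := by
      apply mul_le_mul (by linarith)
      · exact pow_le_pow_left₀ (by positivity) hlogk 2
      · positivity
      · positivity
    have h9 : (0:ℝ) < (2:ℝ) ^ k * (((k:ℝ) + 1) / 3) ^ 2 := by positivity
    calc (2:ℝ) ^ k * (16 * (((2:ℝ) ^ k + 1) * Real.log ((2:ℝ) ^ k + Real.exp 1) ^ 2)⁻¹)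
        ≤ (2:ℝ) ^ k * (16 * ((2:ℝ) ^ k * (((k:ℝ) + 1) / 3) ^ 2)⁻¹) := by
          apply mul_le_mul_of_nonneg_left _ (by positivity)
          exact mul_le_mul_of_nonneg_left (inv_anti₀ h9 hfrac) (by norm_num)
      _ = 144 * ((k:ℝ) + 1)⁻¹ ^ 2 := by
          have hne : ((k:ℝ) + 1) ≠ 0 := by positivity
          field_simp
          ring
  have hmaj : Summable (fun k : ℕ => 144 * ((k:ℝ) + 1)⁻¹ ^ 2) := by
    apply Summable.mul_left
    have base : Summable (fun n : ℕ => ((n:ℝ) ^ 2)⁻¹) :=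
      Real.summable_nat_pow_inv.mpr one_lt_two
    have shift : Summable (fun n : ℕ => (((n + 1 : ℕ):ℝ) ^ 2)⁻¹) :=
      (summable_nat_add_iff 1).mpr base
    apply shift.congr
    intro n
    rw [inv_pow]
    push_cast
    ring_nf
  apply Summable.of_nonneg_of_le _ hle hmaj
  intro k
  apply mul_nonneg (by positivity) (wfun_nonneg _)

lemma term_le (n : ℕ) :
    kolW μ01 F16 n ^ 2 * ENNReal.ofReal (Real.log n) ≤
      if n = 0 then 0 else Gfun (Nat.log 2 n) := by
  by_cases h0 : n = 0
  · rw [h0, if_pos rfl]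
    simp
  · rw [if_neg h0]
    set L := Nat.log 2 n with hLdef
    have hn1 : 1 ≤ n := Nat.one_le_iff_ne_zero.mpr h0
    have hLn : 2 ^ L - 1 ≤ n := le_trans (Nat.sub_le _ _) (Nat.pow_log_le_self 2 h0)
    have hk := kolW_le_master (n := n) (L := L) hLn
    set s : ℝ := Real.sqrt (1/2) with hs
    have hγ0 : (0:ℝ) < Real.log ((L:ℝ) + Real.exp 1) :=
      log_add_exp_pos _ (Nat.cast_nonneg L)
    have hs0 : (0:ℝ) ≤ s := Real.sqrt_nonneg _
    have hsx : (0:ℝ) ≤ 4 * s ^ L * (((L:ℝ) + 1) * Real.log ((L:ℝ) + Real.exp 1))⁻¹ := by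
      positivity
    have hlogn : Real.log n ≤ (L:ℝ) + 1 := by
      have h2L : (n:ℝ) < 2 ^ (L + 1) := by
        exact_mod_cast Nat.lt_pow_succ_log_self one_lt_two n
      have hnpos : (0:ℝ) < (n:ℝ) := by exact_mod_cast hn1
      have h1 : Real.log n ≤ Real.log ((2:ℝ) ^ (L + 1)) :=
        Real.log_le_log hnpos h2L.le
      rw [Real.log_pow] at h1
      have hlog2 : Real.log 2 ≤ 1 := le_trans Real.log_two_lt_d9.le (by norm_num)
      have hL0 : (0:ℝ) ≤ (L:ℝ) := Nat.cast_nonneg L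
      push_cast at h1
      nlinarith
    calc kolW μ01 F16 n ^ 2 * ENNReal.ofReal (Real.log n)
        ≤ ENNReal.ofReal (4 * s ^ L *
            (((L:ℝ) + 1) * Real.log ((L:ℝ) + Real.exp 1))⁻¹) ^ 2 *
            ENNReal.ofReal ((L:ℝ) + 1) := by
          exact mul_le_mul' (pow_le_pow_left' hk 2) (ENNReal.ofReal_le_ofReal hlogn)
      _ = Gfun L := by
          rw [← ENNReal.ofReal_pow hsx, ← ENNReal.ofReal_mul (by positivity), Gfun, γfun]
          congr 1
          have hs2 : s ^ 2 = 1/2 := Real.sq_sqrt (by norm_num)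
          have hexp : (4 * s ^ L * (((L:ℝ) + 1) * Real.log ((L:ℝ) + Real.exp 1))⁻¹) ^ 2
              = 16 * (s ^ 2) ^ L *
                ((((L:ℝ) + 1) * Real.log ((L:ℝ) + Real.exp 1))⁻¹) ^ 2 := by
            rw [← pow_mul, mul_comm 2 L, pow_mul]
            ring
          rw [hexp, hs2]
          ring

lemma count_regroup (m : ℕ) (g : ℕ → ℝ≥0∞) :
    ∑ j ∈ Finset.range (2 ^ m - 1), g (dl j) =
      ∑ ℓ ∈ Finset.range m, (2 ^ ℓ : ℕ) • g ℓ := by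
  have h : ∑ j ∈ Finset.range (2 ^ m - 1), g (dl j) =
      ∑ σ ∈ (Finset.range m).sigma (fun ℓ => Finset.Icc 1 (2 ^ ℓ)), g σ.1 := by
    apply Finset.sum_nbij' (i := fun j => (⟨dl j, dkk j⟩ : Σ _ : ℕ, ℕ))
      (j := fun σ => 2 ^ σ.1 + σ.2 - 2)
    · intro j hj
      rw [Finset.mem_range] at hj
      obtain ⟨h1, h2, h3, _⟩ := dl_spec hj
      simp only [Finset.mem_sigma, Finset.mem_range, Finset.mem_Icc]
      exact ⟨h1, h2, h3⟩
    · intro σ hσ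
      simp only [Finset.mem_sigma, Finset.mem_range, Finset.mem_Icc] at hσ
      rw [Finset.mem_range]
      exact encode_lt hσ.2.1 hσ.2.2 hσ.1
    · intro j hj
      rw [Finset.mem_range] at hj
      obtain ⟨_, _, _, h4⟩ := dl_spec hj
      simp only [h4]
    · intro σ hσ
      simp only [Finset.mem_sigma, Finset.mem_range, Finset.mem_Icc] at hσ
      obtain ⟨h1, h2⟩ := encode_spec hσ.2.1 hσ.2.2
      simp only [h1, h2]
    · intro j hj
      rfl
  rw [h, Finset.sum_sigma]
  apply Finset.sum_congr rfl
  intro ℓ _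
  calc ∑ s ∈ Finset.Icc 1 (2 ^ ℓ), g (⟨ℓ, s⟩ : Σ _ : ℕ, ℕ).fst
      = ∑ _s ∈ Finset.Icc 1 (2 ^ ℓ), g ℓ := rfl
    _ = (2 ^ ℓ + 1 - 1) • g ℓ := by rw [Finset.sum_const, Nat.card_Icc]
    _ = (2 ^ ℓ : ℕ) • g ℓ := by norm_num

lemma part_iii :
    (∑' n : ℕ, kolW μ01 F16 n ^ 2 * ENNReal.ofReal (Real.log n)) ≠ ∞ := by
  have hle1 : (∑' n : ℕ, kolW μ01 F16 n ^ 2 * ENNReal.ofReal (Real.log n)) ≤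
      ∑' n : ℕ, (if n = 0 then 0 else Gfun (Nat.log 2 n)) :=
    Summable.tsum_le_tsum term_le ENNReal.summable ENNReal.summable
  have key : (∑' n : ℕ, (if n = 0 then (0:ℝ≥0∞) else Gfun (Nat.log 2 n))) ≤
      ∑' L : ℕ, ENNReal.ofReal (wfun L) := by
    rw [ENNReal.tsum_eq_iSup_sum]
    apply iSup_le
    intro sfin
    set m := sfin.sup id with hm
    have hsub : sfin ⊆ Finset.range (2 ^ m) := by
      intro x hx
      rw [Finset.mem_range]
      calc x = id x := rfl
        _ ≤ m := Finset.le_sup hx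
        _ < 2 ^ m := Nat.lt_two_pow_self
    calc ∑ n ∈ sfin, (if n = 0 then (0:ℝ≥0∞) else Gfun (Nat.log 2 n))
        ≤ ∑ n ∈ Finset.range (2 ^ m), (if n = 0 then (0:ℝ≥0∞) else Gfun (Nat.log 2 n)) :=
          Finset.sum_le_sum_of_subset hsub
      _ = ∑ j ∈ Finset.range (2 ^ m - 1), Gfun (dl j) := by
          have hsplit : 2 ^ m = (2 ^ m - 1) + 1 := by
            have := Nat.one_le_two_pow (n := m); omega
          conv_lhs => rw [hsplit, Finset.sum_range_succ']
          rw [if_pos rfl, add_zero]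
          apply Finset.sum_congr rfl
          intro j _
          rw [if_neg (Nat.succ_ne_zero j)]
          rfl
      _ = ∑ ℓ ∈ Finset.range m, (2 ^ ℓ : ℕ) • Gfun ℓ := count_regroup m Gfun
      _ ≤ ∑' ℓ : ℕ, (2 ^ ℓ : ℕ) • Gfun ℓ := ENNReal.sum_le_tsum _
      _ = ∑' L : ℕ, ENNReal.ofReal (wfun L) := by
          apply tsum_congr
          intro ℓ
          rw [nsmul_eq_mul, Gfun, wfun]
          have hcast : ((2 ^ ℓ : ℕ) : ℝ≥0∞) = ENNReal.ofReal ((2:ℝ) ^ ℓ) := by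
            rw [ENNReal.ofReal_pow (by norm_num : (0:ℝ) ≤ 2)]
            push_cast
            norm_num
          rw [hcast, ← ENNReal.ofReal_mul (by positivity)]
          congr 1
          have h12 : (2:ℝ) ^ ℓ * (1/2 : ℝ) ^ ℓ = 1 := by
            rw [← mul_pow]; norm_num
          calc (2:ℝ) ^ ℓ * (16 * ((ℓ:ℝ) + 1) * (1/2 : ℝ) ^ ℓ * γfun ℓ ^ 2)
              = ((2:ℝ) ^ ℓ * (1/2 : ℝ) ^ ℓ) * (16 * ((ℓ:ℝ) + 1) * γfun ℓ ^ 2) := by ring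
            _ = 16 * ((ℓ:ℝ) + 1) * γfun ℓ ^ 2 := by rw [h12, one_mul]
  have hfin : (∑' L : ℕ, ENNReal.ofReal (wfun L)) ≠ ∞ := by
    rw [← ENNReal.ofReal_tsum_of_nonneg wfun_nonneg summable_wfun]
    exact ENNReal.ofReal_ne_top
  exact ne_top_of_le_ne_top hfin (hle1.trans key)

lemma γfun_nonneg (ℓ : ℕ) : 0 ≤ γfun ℓ := by
  rw [γfun]
  have := log_add_exp_pos (ℓ:ℝ) (Nat.cast_nonneg ℓ)
  positivity

lemma γfun_pos (ℓ : ℕ) : 0 < γfun ℓ := by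
  rw [γfun]
  have := log_add_exp_pos (ℓ:ℝ) (Nat.cast_nonneg ℓ)
  positivity

lemma bnd_eq (ℓ : ℕ) : bnd ℓ = γfun ℓ ^ 2 := by
  have h0 : 0 ≤ bnd ℓ := by
    rw [bnd]
    have h1 : (0:ℝ) < ((ℓ:ℝ) + 1) ^ (-(2:ℝ)) := Real.rpow_pos_of_pos (by positivity) _
    have h2 : (0:ℝ) < Real.log ((ℓ:ℝ) + Real.exp 1) ^ (-(2:ℝ)) :=
      Real.rpow_pos_of_pos (log_add_exp_pos _ (Nat.cast_nonneg ℓ)) _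
    positivity
  have := sqrt_bnd ℓ
  rw [← γfun] at this
  rw [← this, Real.sq_sqrt h0]

set_option maxHeartbeats 1000000 in
lemma not_summable_γfun : ¬ Summable γfun := by
  intro hsum
  have hanti : ∀ ⦃m n : ℕ⦄, 0 < m → m ≤ n → γfun n ≤ γfun m := by
    intro m n _ hmn
    rw [γfun, γfun]
    have hm := log_add_exp_pos (m:ℝ) (Nat.cast_nonneg m)
    have hcast : (m:ℝ) ≤ (n:ℝ) := by exact_mod_cast hmn
    apply inv_anti₀ (by positivity)
    apply mul_le_mul (by linarith)
      (Real.log_le_log (by positivity) (by linarith)) (by linarith) (by positivity)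
  have hcond := (summable_condensed_iff_of_nonneg (fun ℓ => γfun_nonneg ℓ) hanti).mpr hsum
  have hlow : ∀ k : ℕ, (2 * ((k:ℝ) + 2))⁻¹ ≤ (2:ℝ) ^ k * γfun (2 ^ k) := by
    intro k
    rw [γfun]
    have hcast : ((2 ^ k : ℕ) : ℝ) = (2:ℝ) ^ k := by push_cast; ring
    rw [hcast]
    have hk0 : (0:ℝ) ≤ (k:ℝ) := Nat.cast_nonneg k
    have h3 : (1:ℝ) ≤ 2 ^ k := by
      calc (1:ℝ) = 1 ^ k := (one_pow k).symm
        _ ≤ 2 ^ k := pow_le_pow_left₀ (by norm_num) (by norm_num) k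
    have hexp3 : Real.exp 1 ≤ 3 := by
      have := Real.exp_one_lt_d9
      linarith
    have hlog2 : Real.log 2 ≤ 1 := le_trans Real.log_two_lt_d9.le (by norm_num)
    have hlogpos : (0:ℝ) < Real.log ((2:ℝ) ^ k + Real.exp 1) :=
      log_add_exp_pos _ (by positivity)
    have hloghi : Real.log ((2:ℝ) ^ k + Real.exp 1) ≤ (k:ℝ) + 2 := by
      have h1 : (2:ℝ) ^ k + Real.exp 1 ≤ 2 ^ (k + 2) := by
        have h2 : (2:ℝ) ^ (k + 2) = 4 * 2 ^ k := by ring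
        linarith
      have h4 : Real.log ((2:ℝ) ^ k + Real.exp 1) ≤ Real.log ((2:ℝ) ^ (k + 2)) :=
        Real.log_le_log (by positivity) h1
      rw [Real.log_pow] at h4
      push_cast at h4
      nlinarith
    have hden : ((2:ℝ) ^ k + 1) * Real.log ((2:ℝ) ^ k + Real.exp 1) ≤
        2 * 2 ^ k * ((k:ℝ) + 2) := by
      have := mul_le_mul (show (2:ℝ) ^ k + 1 ≤ 2 * 2 ^ k by linarith) hloghi
        hlogpos.le (by positivity)
      linarith
    have hDpos : (0:ℝ) < ((2:ℝ) ^ k + 1) * Real.log ((2:ℝ) ^ k + Real.exp 1) := by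
      positivity
    have h5 : (2 * (2:ℝ) ^ k * ((k:ℝ) + 2))⁻¹ ≤
        (((2:ℝ) ^ k + 1) * Real.log ((2:ℝ) ^ k + Real.exp 1))⁻¹ :=
      inv_anti₀ hDpos hden
    have h6 : (2:ℝ) ^ k * (2 * (2:ℝ) ^ k * ((k:ℝ) + 2))⁻¹ = (2 * ((k:ℝ) + 2))⁻¹ := by
      have hne : (2:ℝ) ^ k ≠ 0 := by positivity
      have hne2 : ((k:ℝ) + 2) ≠ 0 := by positivity
      field_simp
    calc (2 * ((k:ℝ) + 2))⁻¹ = (2:ℝ) ^ k * (2 * (2:ℝ) ^ k * ((k:ℝ) + 2))⁻¹ := h6.symm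
      _ ≤ (2:ℝ) ^ k * (((2:ℝ) ^ k + 1) * Real.log ((2:ℝ) ^ k + Real.exp 1))⁻¹ :=
          mul_le_mul_of_nonneg_left h5 (by positivity)
  have hs2 : Summable (fun k : ℕ => (2 * ((k:ℝ) + 2))⁻¹) :=
    Summable.of_nonneg_of_le (fun k => by positivity) hlow hcond
  have hs3 : Summable (fun k : ℕ => ((k:ℝ) + 2)⁻¹) := by
    have h := hs2.mul_left 2
    apply h.congr
    intro k
    rw [mul_inv, ← mul_assoc, mul_inv_cancel₀ (two_ne_zero), one_mul]
  have hs4 : Summable (fun n : ℕ => ((n:ℝ))⁻¹) := by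
    apply (summable_nat_add_iff (f := fun n : ℕ => ((n:ℝ))⁻¹) 2).mp
    apply hs3.congr
    intro n
    push_cast
    ring
  exact Real.not_summable_natCast_inv hs4

lemma exists_M (L₀ : ℕ) (C : ℝ) :
    ∃ M, L₀ < M ∧ C ≤ ∑ ℓ ∈ Finset.Ico L₀ M, γfun ℓ := by
  have htend := (not_summable_iff_tendsto_nat_atTop_of_nonneg
    (fun ℓ => γfun_nonneg ℓ)).mp not_summable_γfun
  have h1 := (htend.eventually_ge_atTop (C + ∑ ℓ ∈ Finset.range L₀, γfun ℓ)).and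
    (Filter.eventually_ge_atTop (L₀ + 1))
  obtain ⟨M, hM1, hM2⟩ := h1.exists
  refine ⟨M, by omega, ?_⟩
  have := Finset.sum_Ico_eq_sub γfun (show L₀ ≤ M by omega)
  rw [this]
  linarith

lemma geo_tail_half (L₀ M : ℕ) :
    ∑ ℓ ∈ Finset.Ico L₀ M, (1/2 : ℝ) ^ ℓ ≤ 2 * (1/2 : ℝ) ^ L₀ := by
  have h1 : ∑ ℓ ∈ Finset.Ico L₀ M, (1/2:ℝ) ^ ℓ =
      (1/2:ℝ) ^ L₀ * ∑ j ∈ Finset.range (M - L₀), (1/2:ℝ) ^ j := by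
    rw [Finset.sum_Ico_eq_sum_range, Finset.mul_sum]
    exact Finset.sum_congr rfl fun j _ => by rw [← pow_add]
  rw [h1]
  have h2 : ∑ j ∈ Finset.range (M - L₀), (1/2:ℝ) ^ j ≤ (1 - 1/2)⁻¹ := by
    have := Summable.sum_le_tsum (Finset.range (M - L₀))
      (fun j _ => by positivity)
      (summable_geometric_of_lt_one (by norm_num) (by norm_num : (1/2:ℝ) < 1))
    rwa [tsum_geometric_of_lt_one (by norm_num) (by norm_num)] at this
  have h3 : ((1:ℝ) - 1/2)⁻¹ = 2 := by norm_num
  rw [h3] at h2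
  have h4 : (0:ℝ) ≤ (1/2:ℝ) ^ L₀ := by positivity
  nlinarith

set_option maxHeartbeats 2000000 in
lemma part_ii (n : ℕ) : 1 ≤ sampNum μ01 F16 n := by
  rw [sampNum]
  refine le_iInf fun x => le_iInf fun φ => le_iInf fun hφ => ?_
  apply ENNReal.le_of_forall_pos_le_add
  intro ε hε _
  have hεR : (0:ℝ) < (ε:ℝ) := hε
  -- choose L₀
  obtain ⟨ℓ₀, hℓ₀⟩ := exists_pow_lt_of_lt_one
    (show (0:ℝ) < (ε:ℝ) / (2 * ((n:ℝ) + 1)) by positivity)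
    (show (1/2:ℝ) < 1 by norm_num)
  set L₀ := max 1 ℓ₀ with hL₀def
  have hL₀1 : 1 ≤ L₀ := le_max_left _ _
  have hpow : (n:ℝ) * (2 * (1/2:ℝ) ^ L₀) ≤ (ε:ℝ) := by
    have hmono : (1/2:ℝ) ^ L₀ ≤ (1/2:ℝ) ^ ℓ₀ :=
      pow_le_pow_of_le_one (by norm_num) (by norm_num) (le_max_right 1 ℓ₀)
    have hn0 : (0:ℝ) ≤ (n:ℝ) := Nat.cast_nonneg n
    have hq : (1/2:ℝ) ^ L₀ < (ε:ℝ) / (2 * ((n:ℝ) + 1)) := lt_of_le_of_lt hmono hℓ₀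
    have h2 : (2 * ((n:ℝ) + 1)) * ((1/2:ℝ) ^ L₀) ≤ (ε:ℝ) := by
      calc (2 * ((n:ℝ) + 1)) * ((1/2:ℝ) ^ L₀)
          ≤ (2 * ((n:ℝ) + 1)) * ((ε:ℝ) / (2 * ((n:ℝ) + 1))) :=
            mul_le_mul_of_nonneg_left hq.le (by positivity)
        _ = (ε:ℝ) := by field_simp
    nlinarith [pow_nonneg (show (0:ℝ) ≤ 1/2 by norm_num) L₀]
  -- choose M
  obtain ⟨M, hL₀M, hT⟩ := exists_M L₀ (max 1 (Real.sqrt n))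
  set T := ∑ ℓ ∈ Finset.Ico L₀ M, γfun ℓ with hTdef
  have hT1 : (1:ℝ) ≤ T := le_trans (le_max_left _ _) hT
  have hT0 : (0:ℝ) < T := by linarith
  have hTs : Real.sqrt n ≤ T := le_trans (le_max_right _ _) hT
  have hTn : (n:ℝ) ≤ T ^ 2 := by
    have h1 : Real.sqrt n ^ 2 ≤ T ^ 2 :=
      pow_le_pow_left₀ (Real.sqrt_nonneg _) hTs 2
    rwa [Real.sq_sqrt (Nat.cast_nonneg n)] at h1
  set a : ℕ → ℝ := fun ℓ => γfun ℓ / T with hadef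
  have ha0 : ∀ ℓ, 0 ≤ a ℓ := fun ℓ => div_nonneg (γfun_nonneg ℓ) hT0.le
  have hasum : ∑ ℓ ∈ Finset.Ico L₀ M, a ℓ = 1 := by
    rw [hadef, ← Finset.sum_div, ← hTdef, div_self (ne_of_gt hT0)]
  set hit : ℕ → Finset ℕ := fun ℓ => Finset.image (fun i => k0 ℓ (x i)) Finset.univ
    with hhitdef
  have hhit_sub : ∀ ℓ, hit ℓ ⊆ Finset.Icc 1 (2 ^ ℓ) := by
    intro ℓ k hk
    rw [hhitdef, Finset.mem_image] at hk
    obtain ⟨i, _, hi⟩ := hk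
    rw [← hi]
    exact k0_mem ℓ (x i)
  have hhit_card : ∀ ℓ, ((hit ℓ).card : ℝ) ≤ (n:ℝ) := by
    intro ℓ
    have h1 : (hit ℓ).card ≤ n := by
      calc (hit ℓ).card ≤ Finset.univ.card := Finset.card_image_le
        _ = n := Finset.card_fin n
    exact_mod_cast h1
  set c : ℕ → ℕ → ℂ := fun ℓ k =>
    if ℓ = 0 ∧ k = 1 then 1
    else if L₀ ≤ ℓ ∧ ℓ < M ∧ k ∈ hit ℓ then ((-(a ℓ) : ℝ) : ℂ) else 0 with hcdef
  -- the constraint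
  have hconstraint : ∀ ℓ : ℕ, ∑ k ∈ Finset.Icc 1 (2 ^ ℓ), ‖c ℓ k‖ ^ 2 ≤ bnd ℓ := by
    intro ℓ
    by_cases h0 : ℓ = 0
    · subst h0
      have hIcc : Finset.Icc 1 (2 ^ 0) = {1} := by norm_num
      rw [hIcc, Finset.sum_singleton]
      have hc01 : c 0 1 = 1 := by rw [hcdef]; exact if_pos ⟨rfl, rfl⟩
      have hbnd0 : bnd 0 = 1 := by
        rw [bnd]
        norm_num
      rw [hc01, hbnd0]
      norm_num
    · have hcval : ∀ k, c ℓ k =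
          if L₀ ≤ ℓ ∧ ℓ < M ∧ k ∈ hit ℓ then ((-(a ℓ) : ℝ) : ℂ) else 0 := by
        intro k
        rw [hcdef]
        exact if_neg (fun hcon => h0 hcon.1)
      by_cases hℓm : L₀ ≤ ℓ ∧ ℓ < M
      · have hsum : ∑ k ∈ Finset.Icc 1 (2 ^ ℓ), ‖c ℓ k‖ ^ 2 =
            ∑ k ∈ Finset.Icc 1 (2 ^ ℓ), (if k ∈ hit ℓ then (a ℓ) ^ 2 else 0) := by
          apply Finset.sum_congr rfl
          intro k _
          rw [hcval k]
          by_cases hk : k ∈ hit ℓ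
          · rw [if_pos ⟨hℓm.1, hℓm.2, hk⟩, if_pos hk, Complex.norm_real, Real.norm_eq_abs, sq_abs, neg_sq]
          · rw [if_neg (fun hcon => hk hcon.2.2), if_neg hk, norm_zero]
            norm_num
        rw [hsum, Finset.sum_ite_mem, Finset.inter_eq_right.mpr (hhit_sub ℓ),
          Finset.sum_const, bnd_eq, nsmul_eq_mul]
        have h1 : ((hit ℓ).card : ℝ) * a ℓ ^ 2 ≤ (n:ℝ) * a ℓ ^ 2 :=
          mul_le_mul_of_nonneg_right (hhit_card ℓ) (sq_nonneg _)
        have h2 : (n:ℝ) * a ℓ ^ 2 ≤ γfun ℓ ^ 2 := by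
          rw [hadef]
          simp only [div_pow]
          have hT2 : (0:ℝ) < T ^ 2 := by positivity
          have heq : (n:ℝ) * (γfun ℓ ^ 2 / T ^ 2) = (n:ℝ) * γfun ℓ ^ 2 / T ^ 2 := by ring
          rw [heq, div_le_iff₀ hT2]
          nlinarith [sq_nonneg (γfun ℓ)]
        linarith
      · have hz : ∑ k ∈ Finset.Icc 1 (2 ^ ℓ), ‖c ℓ k‖ ^ 2 = 0 := by
          apply Finset.sum_eq_zero
          intro k _
          rw [hcval k, if_neg (fun hcon => hℓm ⟨hcon.1, hcon.2.1⟩), norm_zero]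
          norm_num
        rw [hz, bnd_eq]
        positivity
  -- finite support
  have hfin : {q : ℕ × ℕ | c q.1 q.2 ≠ 0}.Finite := by
    apply Set.Finite.subset (Finset.range M ×ˢ Finset.Iic (2 ^ M)).finite_toSet
    rintro ⟨ℓ, k⟩ hq
    simp only [Set.mem_setOf_eq, hcdef] at hq
    simp only [Finset.coe_product, Set.mem_prod, Finset.mem_coe, Finset.mem_range,
      Finset.mem_Iic]
    by_cases h1 : ℓ = 0 ∧ k = 1
    · obtain ⟨ha', hb'⟩ := h1
      subst ha'; subst hb'
      exact ⟨by omega, Nat.one_le_two_pow⟩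
    · rw [if_neg h1] at hq
      by_cases h2 : L₀ ≤ ℓ ∧ ℓ < M ∧ k ∈ hit ℓ
      · refine ⟨h2.2.1, ?_⟩
        have hsub := hhit_sub ℓ h2.2.2
        rw [Finset.mem_Icc] at hsub
        calc k ≤ 2 ^ ℓ := hsub.2
          _ ≤ 2 ^ M := Nat.pow_le_pow_right (by norm_num) (le_of_lt h2.2.1)
      · rw [if_neg h2] at hq
        exact absurd rfl hq
  set f : UnitIco → ℂ :=
    (fun t => ∑' ℓ : ℕ, ∑ k ∈ Finset.Icc 1 (2 ^ ℓ), c ℓ k * dyadicChi ℓ k t) with hfdef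
  have hfF : f ∈ F16 := ⟨c, hconstraint, hfin, hfdef⟩
  have hczeroM : ∀ ℓ, M ≤ ℓ → ∀ k, c ℓ k = 0 := by
    intro ℓ hℓ k
    simp only [hcdef]
    rw [if_neg (fun hcon => by omega), if_neg (fun hcon => by omega)]
  -- evaluation of f
  have hfeval : ∀ t : UnitIco, f t = 1 +
      ((∑ ℓ ∈ Finset.Ico L₀ M, (if k0 ℓ t ∈ hit ℓ then -(a ℓ) else 0) : ℝ) : ℂ) := by
    intro t
    rw [hfdef]
    simp only
    have h1 : ∑' ℓ : ℕ, ∑ k ∈ Finset.Icc 1 (2 ^ ℓ), c ℓ k * dyadicChi ℓ k t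
        = ∑ ℓ ∈ Finset.range M, ∑ k ∈ Finset.Icc 1 (2 ^ ℓ), c ℓ k * dyadicChi ℓ k t := by
      apply tsum_eq_sum
      intro ℓ hℓ
      rw [Finset.mem_range, not_lt] at hℓ
      exact Finset.sum_eq_zero fun k _ => by rw [hczeroM ℓ hℓ k, zero_mul]
    rw [h1]
    rw [Finset.sum_congr rfl (fun ℓ _ => level_apply ℓ (c ℓ) t)]
    have hM0 : 0 < M := by omega
    rw [Finset.range_eq_Ico, Finset.sum_eq_sum_Ico_succ_bot hM0]
    have h3 : c 0 (k0 0 t) = 1 := by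
      have hk := k0_mem 0 t
      rw [pow_zero, Finset.Icc_self, Finset.mem_singleton] at hk
      rw [hk]
      simp only [hcdef]
      norm_num
    rw [h3]
    rw [← Finset.sum_Ico_consecutive (fun ℓ => c ℓ (k0 ℓ t))
      (show 0 + 1 ≤ L₀ by omega) (show L₀ ≤ M by omega)]
    have h4 : ∑ ℓ ∈ Finset.Ico (0 + 1) L₀, c ℓ (k0 ℓ t) = 0 := by
      apply Finset.sum_eq_zero
      intro ℓ hℓ
      rw [Finset.mem_Ico] at hℓ
      simp only [hcdef]
      rw [if_neg (fun hcon => by omega), if_neg (fun hcon => by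
        exact absurd hcon.1 (by omega))]
    rw [h4, zero_add]
    have h5 : ∀ ℓ ∈ Finset.Ico L₀ M, c ℓ (k0 ℓ t) =
        ((if k0 ℓ t ∈ hit ℓ then -(a ℓ) else 0 : ℝ) : ℂ) := by
      intro ℓ hℓ
      rw [Finset.mem_Ico] at hℓ
      simp only [hcdef]
      rw [if_neg (fun hcon => by omega)]
      by_cases hk : k0 ℓ t ∈ hit ℓ
      · rw [if_pos ⟨hℓ.1, hℓ.2, hk⟩, if_pos hk]
      · rw [if_neg (fun hcon => hk hcon.2.2), if_neg hk, Complex.ofReal_zero]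
    rw [Finset.sum_congr rfl h5]
    push_cast
    ring
  have hfx : ∀ i : Fin n, f (x i) = 0 := by
    intro i
    rw [hfeval (x i)]
    have hall : ∀ ℓ ∈ Finset.Ico L₀ M,
        (if k0 ℓ (x i) ∈ hit ℓ then -(a ℓ) else 0) = -(a ℓ) := by
      intro ℓ _
      apply if_pos
      rw [hhitdef]
      exact Finset.mem_image_of_mem _ (Finset.mem_univ i)
    rw [Finset.sum_congr rfl hall]
    have hns : ∑ ℓ ∈ Finset.Ico L₀ M, -(a ℓ) = -1 := by
      rw [← hasum]
      exact Finset.sum_neg_distrib (f := a)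
    rw [hns]
    push_cast
    ring
  -- the bad set
  set Bad : Set UnitIco := ⋃ ℓ ∈ Finset.Ico L₀ M, ⋃ k ∈ hit ℓ, Aset ℓ k with hBaddef
  have hBadMeas : MeasurableSet Bad := by
    apply MeasurableSet.biUnion (Finset.Ico L₀ M).countable_toSet
    intro ℓ _
    exact MeasurableSet.biUnion (hit ℓ).countable_toSet
      (fun k _ => measurableSet_Aset ℓ k)
  have hfgood : ∀ t, t ∉ Bad → f t = 1 := by
    intro t ht
    rw [hfeval t]
    have hz : ∀ ℓ ∈ Finset.Ico L₀ M,
        (if k0 ℓ t ∈ hit ℓ then -(a ℓ) else 0) = 0 := by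
      intro ℓ hℓ
      rw [if_neg]
      intro hk
      exact ht (Set.mem_biUnion hℓ (Set.mem_biUnion hk (mem_Aset_k0 ℓ t)))
    rw [Finset.sum_congr rfl hz, Finset.sum_const, smul_zero]
    push_cast
    ring
  have hμBad : μ01 Bad ≤ (ε : ℝ≥0∞) := by
    calc μ01 Bad ≤ ∑ ℓ ∈ Finset.Ico L₀ M, μ01 (⋃ k ∈ hit ℓ, Aset ℓ k) :=
        measure_biUnion_finset_le _ _
      _ ≤ ∑ ℓ ∈ Finset.Ico L₀ M, ∑ k ∈ hit ℓ, μ01 (Aset ℓ k) :=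
          Finset.sum_le_sum (fun ℓ _ => measure_biUnion_finset_le _ _)
      _ = ∑ ℓ ∈ Finset.Ico L₀ M, ENNReal.ofReal (((hit ℓ).card : ℝ) * (1/2:ℝ) ^ ℓ) := by
          apply Finset.sum_congr rfl
          intro ℓ _
          have hval : ∀ k ∈ hit ℓ, μ01 (Aset ℓ k) = ENNReal.ofReal ((1/2:ℝ) ^ ℓ) := by
            intro k hk
            have hsub := hhit_sub ℓ hk
            rw [Finset.mem_Icc] at hsub
            exact μ01_Aset ℓ k hsub.1 hsub.2
          rw [Finset.sum_congr rfl hval, Finset.sum_const, nsmul_eq_mul,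
            ← ENNReal.ofReal_natCast ((hit ℓ).card),
            ← ENNReal.ofReal_mul (Nat.cast_nonneg _)]
      _ ≤ (ε : ℝ≥0∞) := by
          rw [← ENNReal.ofReal_sum_of_nonneg (fun ℓ _ => by positivity)]
          rw [← ENNReal.ofReal_coe_nnreal]
          apply ENNReal.ofReal_le_ofReal
          have hstep : ∑ ℓ ∈ Finset.Ico L₀ M, ((hit ℓ).card : ℝ) * (1/2:ℝ) ^ ℓ ≤
              ∑ ℓ ∈ Finset.Ico L₀ M, (n:ℝ) * (1/2:ℝ) ^ ℓ :=
            Finset.sum_le_sum (fun ℓ _ =>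
              mul_le_mul_of_nonneg_right (hhit_card ℓ) (by positivity))
          have hgeo := geo_tail_half L₀ M
          have hstep2 : (n:ℝ) * ∑ ℓ ∈ Finset.Ico L₀ M, (1/2:ℝ) ^ ℓ ≤
              (n:ℝ) * (2 * (1/2:ℝ) ^ L₀) :=
            mul_le_mul_of_nonneg_left hgeo (Nat.cast_nonneg n)
          rw [← Finset.mul_sum] at hstep
          linarith
  -- lower bound for the L2 norm of f
  have hlp : μ01 Badᶜ ≤ eLpNorm f 2 μ01 := by
    have hpt : ∀ t, (Badᶜ).indicator (fun _ => (1:ℝ≥0∞)) t ≤ (‖f t‖₊ : ℝ≥0∞) ^ (2:ℝ) := by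
      intro t
      by_cases ht : t ∈ Badᶜ
      · rw [Set.indicator_of_mem ht, hfgood t ht]
        norm_num
      · rw [Set.indicator_of_notMem ht]
        exact zero_le
    have hint : μ01 Badᶜ ≤ ∫⁻ t, (‖f t‖₊ : ℝ≥0∞) ^ (2:ℝ) ∂μ01 := by
      rw [← lintegral_indicator_one hBadMeas.compl]
      exact lintegral_mono hpt
    rw [eLpNorm_eq_lintegral_rpow_enorm_toReal (by norm_num) (by norm_num)]
    have htr : (2 : ℝ≥0∞).toReal = (2:ℝ) := by norm_num
    rw [htr]
    calc μ01 Badᶜ = (μ01 Badᶜ) ^ (1:ℝ) := (ENNReal.rpow_one _).symm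
      _ ≤ (μ01 Badᶜ) ^ ((1:ℝ)/2) :=
          ENNReal.rpow_le_rpow_of_exponent_ge prob_le_one (by norm_num)
      _ ≤ (∫⁻ t, (‖f t‖₊ : ℝ≥0∞) ^ (2:ℝ) ∂μ01) ^ ((1:ℝ)/2) :=
          ENNReal.rpow_le_rpow hint (by norm_num)
  -- the error function is f itself
  have herr : (fun t => f t - ∑ i, f (x i) * φ i t) = f := by
    funext t
    have hz : ∀ i : Fin n, f (x i) * φ i t = 0 := fun i => by rw [hfx i, zero_mul]
    rw [Finset.sum_congr rfl (fun i _ => hz i), Finset.sum_const, smul_zero, sub_zero]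
  have hS : eLpNorm f 2 μ01 ≤
      ⨆ g ∈ F16, eLpNorm (fun t => g t - ∑ i, g (x i) * φ i t) 2 μ01 := by
    refine le_iSup₂_of_le f hfF ?_
    rw [herr]
  calc (1:ℝ≥0∞) = μ01 Set.univ := measure_univ.symm
    _ ≤ μ01 Bad + μ01 Badᶜ := by
        have h := measure_union_le (μ := μ01) Bad Badᶜ
        rwa [Set.union_compl_self] at h
    _ ≤ ↑ε + (⨆ g ∈ F16, eLpNorm (fun t => g t - ∑ i, g (x i) * φ i t) 2 μ01) :=
        add_le_add hμBad (hlp.trans hS)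
    _ = (⨆ g ∈ F16, eLpNorm (fun t => g t - ∑ i, g (x i) * φ i t) 2 μ01) + ↑ε :=
        add_comm _ _

theorem statement16 :
    -- (i) decay of the Kolmogorov widths
    (∃ C : ℝ, 0 < C ∧ ∃ N : ℕ, ∀ n : ℕ, N ≤ n → 2 ≤ n →
      kolW μ01 F16 n ≤
        ENNReal.ofReal (C * (n : ℝ) ^ (-(1 / 2) : ℝ) *
          (Real.log n)⁻¹ * (Real.log (Real.log n))⁻¹)) ∧
    -- in particular `(d_n(F) (log n)^{1/2})_n ∈ ℓ₂`
    (∑' n : ℕ, kolW μ01 F16 n ^ 2 * ENNReal.ofReal (Real.log n) ≠ ∞) ∧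
    -- (ii) the sampling numbers do not tend to zero
    (∀ n : ℕ, 1 ≤ sampNum μ01 F16 n) := by
  refine ⟨⟨6, by norm_num, 16, fun n hn _ => part_i n hn⟩, part_iii, part_ii⟩

end
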